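/- Under the setup where given X = a_i the observations Y_1, Y_2, ... are i.i.d. with density g_i, and J_j = {a_ℓ : D(g_j ‖ g_ℓ) = 0} where D denotes Kullback-Leibler divergence: the event {X ∈ J_j} is measurable with respect to σ(Y_1, Y_2, ...), and consequently E[(1{X ∈ J_j} - P(X ∈ J_j | Y_1,...,Y_m))²] → 0 as m → ∞. -/

import Mathlib

open MeasureTheory Filter
open scoped ENNReal NNReal

lemma my_gibbs {φ : Measure ℝ} [SigmaFinite φ] {p q : ℝ → ℝ}
    (hp0 : ∀ u, 0 ≤ p u) (hq0 : ∀ u, 0 ≤ q u)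
    (hp1 : ∫ u, p u ∂φ = 1) (hq1 : ∫ u, q u ∂φ = 1)
    (hsupp : ∀ u, p u = 0 ↔ q u = 0)
    (hint : Integrable (fun u => p u * Real.log (p u / q u)) φ) :
    0 ≤ ∫ u, p u * Real.log (p u / q u) ∂φ ∧
    ((∫ u, p u * Real.log (p u / q u) ∂φ) = 0 → p =ᵐ[φ] q) := by
  have hpint : Integrable p φ := by
    by_contra h; rw [integral_undef h] at hp1; norm_num at hp1
  have hqint : Integrable q φ := by
    by_contra h; rw [integral_undef h] at hq1; norm_num at hq1
  set F : ℝ → ℝ := fun u => (q u - p u) + p u * Real.log (p u / q u) with hF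
  have hFnn : ∀ u, 0 ≤ F u := by
    intro u
    rcases eq_or_lt_of_le (hp0 u) with h0 | hpos
    · have hq := (hsupp u).1 h0.symm
      simp [hF, ← h0, hq]
    · have hqpos : 0 < q u := by
        rcases eq_or_lt_of_le (hq0 u) with h0q | h
        · exact absurd ((hsupp u).2 h0q.symm) hpos.ne'
        · exact h
      have hlog : Real.log (q u / p u) ≤ q u / p u - 1 :=
        Real.log_le_sub_one_of_pos (div_pos hqpos hpos)
      have hneg : Real.log (q u / p u) = - Real.log (p u / q u) := by
        rw [← Real.log_inv]; congr 1; field_simp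
      rw [hneg] at hlog
      have := mul_le_mul_of_nonneg_left hlog (le_of_lt hpos)
      have h2 : p u * (q u / p u - 1) = q u - p u := by field_simp
      simp only [hF]; nlinarith
  have hFint : Integrable F φ := ((hqint.sub hpint).add hint : _)
  have hIF : ∫ u, F u ∂φ = ∫ u, p u * Real.log (p u / q u) ∂φ := by
    have h1 : ∫ u, F u ∂φ = (∫ u, (q u - p u) ∂φ) + ∫ u, p u * Real.log (p u / q u) ∂φ :=
      integral_add (hqint.sub hpint) hint
    rw [h1, integral_sub hqint hpint, hp1, hq1]; ring
  constructor
  · rw [← hIF]; exact integral_nonneg hFnn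
  · intro hD
    have hF0 : F =ᵐ[φ] 0 := by
      rw [← integral_eq_zero_iff_of_nonneg hFnn hFint, hIF, hD]
    filter_upwards [hF0] with u hu
    simp only [Pi.zero_apply, hF] at hu
    rcases eq_or_lt_of_le (hp0 u) with h0 | hpos
    · rw [← h0, ← (hsupp u).1 h0.symm]
    · have hqpos : 0 < q u := by
        rcases eq_or_lt_of_le (hq0 u) with h0q | h
        · exact absurd ((hsupp u).2 h0q.symm) hpos.ne'
        · exact h
      by_contra hne
      have hne' : q u / p u ≠ 1 := by
        intro h; apply hne; field_simp at h; linarith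
      have hlog : Real.log (q u / p u) < q u / p u - 1 :=
        Real.log_lt_sub_one_of_pos (div_pos hqpos hpos) hne'
      have hneg : Real.log (q u / p u) = - Real.log (p u / q u) := by
        rw [← Real.log_inv]; congr 1; field_simp
      rw [hneg] at hlog
      have := mul_lt_mul_of_pos_left hlog hpos
      have h2 : p u * (q u / p u - 1) = q u - p u := by field_simp
      nlinarith

/-- If, given `X = a_i`, the observations `Y_1, Y_2, …` are i.i.d. with density
`g_i`, and `J_j = {ℓ : D(g_j‖g_ℓ) = 0}`, then the event `{X ∈ J_j}` coincides,
up to a `P`-null set, with an event in `σ(Y_1, Y_2, …)`, and consequently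
`E[(1{X ∈ J_j} - P(X ∈ J_j | Y_1,…,Y_m))²] → 0` as `m → ∞`. -/
theorem stmt_13 (Ω : Type*) [m0 : MeasurableSpace Ω] (P : Measure Ω)
    [IsProbabilityMeasure P] (d : ℕ)
    (X : Ω → Fin d) (hX : Measurable X)
    (Y : ℕ → Ω → ℝ) (hY : ∀ k, Measurable (Y k))
    (φ : Measure ℝ) [SigmaFinite φ]
    (g : Fin d → ℝ → ℝ) (hgm : ∀ i, Measurable (g i)) (hg0 : ∀ i u, 0 ≤ g i u)
    (hg1 : ∀ i, ∫ u, g i u ∂φ = 1)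
    (hsupp : ∀ i j u, g i u = 0 ↔ g j u = 0)
    (hint : ∀ i j, Integrable (fun u => g i u * Real.log (g i u / g j u)) φ)
    (w : Fin d → ℝ) (hw0 : ∀ i, 0 ≤ w i) (hw1 : ∑ i, w i = 1)
    (hlaw : ∀ (i : Fin d) (r : ℕ) (B : Fin r → Set ℝ),
      (∀ k, MeasurableSet (B k)) →
      P ({ω | X ω = i} ∩ ⋂ k : Fin r, Y k ⁻¹' B k) =
        ENNReal.ofReal (w i * ∏ k, ∫ u in B k, g i u ∂φ))
    (j : Fin d)
    -- the event `{X ∈ J_j}` where `J_j = {ℓ : D(g_j‖g_ℓ) = 0}`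
    (E : Set Ω)
    (hE : E = {ω | (∫ u, g j u * Real.log (g j u / g (X ω) u) ∂φ) = 0}) :
    (∃ A : Set Ω,
        MeasurableSet[⨆ k : ℕ, MeasurableSpace.comap (Y k)
          (inferInstance : MeasurableSpace ℝ)] A ∧
        P (symmDiff A E) = 0) ∧
    Tendsto
      (fun m : ℕ => ∫ ω,
        (E.indicator (fun _ => (1 : ℝ)) ω -
          (P[E.indicator (fun _ => (1 : ℝ)) |
            ⨆ k ∈ Finset.range m, MeasurableSpace.comap (Y k)
              (inferInstance : MeasurableSpace ℝ)]) ω) ^ 2 ∂P)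
      atTop (nhds 0) := by
  classical
  -- basic integrability of the densities
  have hgint : ∀ i, Integrable (g i) φ := by
    intro i
    by_contra h
    have := hg1 i
    rw [integral_undef h] at this
    norm_num at this
  -- Gibbs facts
  have hD : ∀ i ℓ : Fin d, 0 ≤ ∫ u, g i u * Real.log (g i u / g ℓ u) ∂φ ∧
      ((∫ u, g i u * Real.log (g i u / g ℓ u) ∂φ) = 0 → g i =ᵐ[φ] g ℓ) :=
    fun i ℓ => my_gibbs (hg0 i) (hg0 ℓ) (hg1 i) (hg1 ℓ) (fun u => hsupp i ℓ u) (hint i ℓ)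
  -- the "equivalence class" of j
  set S : Set (Fin d) := {i | (∫ u, g j u * Real.log (g j u / g i u) ∂φ) = 0} with hSdef
  have hES : E = X ⁻¹' S := by rw [hE]; rfl
  -- pointwise log identity (with Lean's conventions log 0 = 0, x/0 = 0)
  have hlog_neg : ∀ (a b : ℝ), Real.log (a / b) = - Real.log (b / a) := by
    intro a b
    rcases eq_or_ne a 0 with ha | ha
    · simp [ha]
    rcases eq_or_ne b 0 with hb | hb
    · simp [hb]
    rw [← Real.log_inv]; congr 1; field_simp
  -- the statistic functions
  set f : Fin d → ℝ → ℝ := fun ℓ u => Real.log (g ℓ u / g j u) with hfdef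
  have hfm : ∀ ℓ, Measurable (f ℓ) :=
    fun ℓ => Real.measurable_log.comp ((hgm ℓ).div (hgm j))
  -- the integrand identity
  have hgf_eq : ∀ i ℓ : Fin d, ∀ u, g i u * f ℓ u =
      g i u * Real.log (g i u / g j u) - g i u * Real.log (g i u / g ℓ u) := by
    intro i ℓ u
    rcases eq_or_ne (g i u) 0 with h0 | h0
    · simp [h0]
    · have hj0 : g j u ≠ 0 := fun h => h0 ((hsupp i j u).2 h)
      have hl0 : g ℓ u ≠ 0 := fun h => h0 ((hsupp i ℓ u).2 h)
      simp only [hfdef]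
      rw [Real.log_div hl0 hj0, Real.log_div h0 hj0, Real.log_div h0 hl0]
      ring
  have hgfint : ∀ i ℓ : Fin d, Integrable (fun u => g i u * f ℓ u) φ := by
    intro i ℓ
    have : (fun u => g i u * f ℓ u) = fun u =>
        g i u * Real.log (g i u / g j u) - g i u * Real.log (g i u / g ℓ u) :=
      funext (hgf_eq i ℓ)
    rw [this]
    exact (hint i j).sub (hint i ℓ)
  -- the limit values
  set c : Fin d → Fin d → ℝ := fun i ℓ => ∫ u, g i u * f ℓ u ∂φ with hcdef
  -- sign facts
  have hneg_id : ∀ ℓ : Fin d, ∀ u, g j u * f ℓ u = -(g j u * Real.log (g j u / g ℓ u)) := by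
    intro ℓ u
    rw [hfdef, hlog_neg]
    ring
  have hSc : ∀ i ∈ S, ∀ ℓ, c i ℓ ≤ 0 := by
    intro i hi ℓ
    have hji : g j =ᵐ[φ] g i := (hD j i).2 hi
    have hcongr : (fun u => g i u * f ℓ u) =ᵐ[φ] fun u => g j u * f ℓ u := by
      filter_upwards [hji] with u hu
      rw [hu]
    have h1 : c i ℓ = ∫ u, g j u * f ℓ u ∂φ := integral_congr_ae hcongr
    have h2 : ∫ u, g j u * f ℓ u ∂φ = - ∫ u, g j u * Real.log (g j u / g ℓ u) ∂φ := by
      rw [← integral_neg]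
      exact integral_congr_ae (Filter.Eventually.of_forall fun u => hneg_id ℓ u)
    rw [h1, h2]
    linarith [(hD j ℓ).1]
  have hSc' : ∀ i ∉ S, 0 < c i i := by
    intro i hi
    have hid : (fun u => g i u * f i u) = fun u => g i u * Real.log (g i u / g j u) := by
      funext u
      have := hgf_eq i i u
      simpa using this
    have hnn : 0 ≤ c i i := by rw [hcdef]; simp only [hid]; exact (hD i j).1
    rcases eq_or_lt_of_le hnn with h0 | h
    · exfalso
      apply hi
      have hij : g i =ᵐ[φ] g j := by
        apply (hD i j).2
        rw [hcdef] at h0; simp only [hid] at h0; exact h0.symm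
      have : (fun u => g j u * Real.log (g j u / g i u)) =ᵐ[φ] fun _ => (0 : ℝ) := by
        filter_upwards [hij] with u hu
        rcases eq_or_ne (g j u) 0 with h0' | h0'
        · simp [h0']
        · rw [← hu, div_self (fun hh => h0' (by rw [← hu]; exact hh))]
          simp
      show (∫ u, g j u * Real.log (g j u / g i u) ∂φ) = 0
      rw [integral_congr_ae this, integral_zero]
    · exact h
  -- measurability of {X = i}
  have hXi : ∀ i : Fin d, MeasurableSet {ω | X ω = i} :=
    fun i => hX (measurableSet_singleton i)
  -- probability of {X = i}
  have hPX : ∀ i : Fin d, P {ω | X ω = i} = ENNReal.ofReal (w i) := by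
    intro i
    have := hlaw i 0 Fin.elim0 (fun k => k.elim0)
    simpa using this
  -- the SLLN under the conditional measures
  have key : ∀ i : Fin d, ∀ᵐ ω ∂(P.restrict {ω | X ω = i}),
      ∀ ℓ : Fin d, Tendsto (fun n : ℕ => (∑ k ∈ Finset.range n, f ℓ (Y k ω)) / n)
        atTop (nhds (c i ℓ)) := by
    intro i
    rcases eq_or_lt_of_le (hw0 i) with hwi0 | hwi
    · have : P.restrict {ω | X ω = i} = 0 := by
        rw [Measure.restrict_eq_zero, hPX i, ← hwi0]
        simp
      rw [this]
      simp
    set a : ℝ≥0∞ := ENNReal.ofReal (w i) with hadef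
    have ha0 : a ≠ 0 := by
      rw [hadef]
      simp [ENNReal.ofReal_eq_zero, not_le, hwi]
    have haT : a ≠ ⊤ := ENNReal.ofReal_ne_top
    set Pi : Measure Ω := a⁻¹ • P.restrict {ω | X ω = i} with hPidef
    have hPiprob : IsProbabilityMeasure Pi := by
      constructor
      rw [hPidef, Measure.smul_apply, smul_eq_mul, Measure.restrict_apply_univ, hPX i]
      exact ENNReal.inv_mul_cancel ha0 haT
    -- cylinder law
    have hcyl : ∀ (r : ℕ) (B : ℕ → Set ℝ), (∀ k, MeasurableSet (B k)) →
        Pi (⋂ k ∈ Finset.range r, Y k ⁻¹' B k) =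
          ∏ k ∈ Finset.range r, ENNReal.ofReal (∫ u in B k, g i u ∂φ) := by
      intro r B hB
      have hseteq : (⋂ k ∈ Finset.range r, Y k ⁻¹' B k) = ⋂ k : Fin r, Y k ⁻¹' B k := by
        ext ω
        simp only [Set.mem_iInter, Finset.mem_range]
        exact ⟨fun h k => h k k.2, fun h k hk => h ⟨k, hk⟩⟩
      have hlw := hlaw i r (fun k : Fin r => B k) (fun k => hB k)
      have hprodnn : 0 ≤ ∏ k : Fin r, ∫ u in B (k : ℕ), g i u ∂φ :=
        Finset.prod_nonneg fun k _ => setIntegral_nonneg (hB k) (fun u _ => hg0 i u)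
      have hofr : ENNReal.ofReal (w i * ∏ k : Fin r, ∫ u in B (k : ℕ), g i u ∂φ)
          = a * ∏ k ∈ Finset.range r, ENNReal.ofReal (∫ u in B k, g i u ∂φ) := by
        rw [ENNReal.ofReal_mul (hw0 i), ← hadef]
        congr 1
        rw [ENNReal.ofReal_prod_of_nonneg
          (fun k _ => setIntegral_nonneg (hB ((k : Fin r) : ℕ)) (fun u _ => hg0 i u))]
        exact Fin.prod_univ_eq_prod_range (fun k => ENNReal.ofReal (∫ u in B k, g i u ∂φ)) r
      rw [hPidef, Measure.smul_apply, smul_eq_mul, hseteq,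
        Measure.restrict_apply' (hXi i), Set.inter_comm, hlw, hofr, ← mul_assoc,
        ENNReal.inv_mul_cancel ha0 haT, one_mul]
    -- single coordinate law
    have hsingle : ∀ (k : ℕ) (s : Set ℝ), MeasurableSet s →
        Pi (Y k ⁻¹' s) = ENNReal.ofReal (∫ u in s, g i u ∂φ) := by
      intro k s hs
      have hB : ∀ m, MeasurableSet (if m = k then s else Set.univ) := by
        intro m; split <;> simp [hs]
      have h1 := hcyl (k + 1) (fun m => if m = k then s else Set.univ) hB
      have hset : (⋂ m ∈ Finset.range (k + 1), Y m ⁻¹' (if m = k then s else Set.univ))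
          = Y k ⁻¹' s := by
        ext ω
        simp only [Set.mem_iInter, Finset.mem_range, Set.mem_preimage]
        constructor
        · intro h
          have := h k (Nat.lt_succ_self k)
          simpa using this
        · intro h m hm
          by_cases hmk : m = k
          · subst hmk; simpa using h
          · simp [hmk]
      have hprod : (∏ m ∈ Finset.range (k + 1),
          ENNReal.ofReal (∫ u in (if m = k then s else Set.univ), g i u ∂φ))
          = ENNReal.ofReal (∫ u in s, g i u ∂φ) := by
        rw [Finset.prod_eq_single k]
        · simp
        · intro m _ hmk
          simp [hmk, hg1 i]
        · intro h
          exact absurd (Finset.mem_range.2 (Nat.lt_succ_self k)) h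
      rw [hset, hprod] at h1
      exact h1
    -- identical distribution
    have hmap : ∀ k : ℕ, Measure.map (Y k) Pi = Measure.map (Y 0) Pi := by
      intro k
      refine Measure.ext fun s hs => ?_
      rw [Measure.map_apply (hY k) hs, Measure.map_apply (hY 0) hs,
        hsingle k s hs, hsingle 0 s hs]
    have hident : ∀ k : ℕ, ProbabilityTheory.IdentDistrib (Y k) (Y 0) Pi Pi :=
      fun k => ⟨(hY k).aemeasurable, (hY 0).aemeasurable, hmap k⟩
    -- independence
    have hindep : Pairwise (Function.onFun (ProbabilityTheory.IndepFun · · Pi) Y) := by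
      intro k l hkl
      rw [Function.onFun, ProbabilityTheory.indepFun_iff_measure_inter_preimage_eq_mul]
      intro s t hs ht
      set B : ℕ → Set ℝ := fun m => if m = k then s else if m = l then t else Set.univ with hBdef
      have hB : ∀ m, MeasurableSet (B m) := by
        intro m; rw [hBdef]; dsimp only; split
        · exact hs
        · split
          · exact ht
          · exact MeasurableSet.univ
      set r : ℕ := max k l + 1 with hrdef
      have hkr : k < r := lt_of_le_of_lt (le_max_left k l) (Nat.lt_succ_self _)
      have hlr : l < r := lt_of_le_of_lt (le_max_right k l) (Nat.lt_succ_self _)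
      have h1 := hcyl r B hB
      have hset : (⋂ m ∈ Finset.range r, Y m ⁻¹' B m) = Y k ⁻¹' s ∩ Y l ⁻¹' t := by
        ext ω
        simp only [Set.mem_iInter, Finset.mem_range, Set.mem_preimage, Set.mem_inter_iff]
        constructor
        · intro h
          refine ⟨?_, ?_⟩
          · have := h k hkr
            simpa [hBdef] using this
          · have := h l hlr
            simpa [hBdef, hkl.symm] using this
        · rintro ⟨h1, h2⟩ m hm
          rw [hBdef]
          dsimp only
          split
          · next hmk => subst hmk; exact h1
          · split
            · next hml => subst hml; exact h2
            · trivial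
      have hterm : ∀ m, ENNReal.ofReal (∫ u in B m, g i u ∂φ) =
          (if m = k then ENNReal.ofReal (∫ u in s, g i u ∂φ) else 1) *
          (if m = l then ENNReal.ofReal (∫ u in t, g i u ∂φ) else 1) := by
        intro m
        rw [hBdef]
        by_cases hmk : m = k
        · subst hmk
          simp [hkl, hg1 i]
        · by_cases hml : m = l
          · subst hml
            simp [hmk, hg1 i]
          · simp [hmk, hml, hg1 i]
      have hprod : (∏ m ∈ Finset.range r, ENNReal.ofReal (∫ u in B m, g i u ∂φ)) =
          ENNReal.ofReal (∫ u in s, g i u ∂φ) * ENNReal.ofReal (∫ u in t, g i u ∂φ) := by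
        simp only [hterm]
        rw [Finset.prod_mul_distrib, Finset.prod_ite_eq' (Finset.range r) k,
          Finset.prod_ite_eq' (Finset.range r) l]
        simp [Finset.mem_range.2 hkr, Finset.mem_range.2 hlr]
      rw [hset, hprod] at h1
      rw [h1, hsingle k s hs, hsingle l t ht]
    -- law of Y 0 as density measure
    have hmapwd : Measure.map (Y 0) Pi = φ.withDensity (fun u => ENNReal.ofReal (g i u)) := by
      refine Measure.ext fun s hs => ?_
      rw [Measure.map_apply (hY 0) hs, hsingle 0 s hs, withDensity_apply _ hs,
        ofReal_integral_eq_lintegral_ofReal ((hgint i).integrableOn)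
          (Filter.Eventually.of_forall fun u => hg0 i u)]
    -- per-ℓ strong law
    have hae : ∀ᵐ ω ∂Pi, ∀ ℓ : Fin d,
        Tendsto (fun n : ℕ => (∑ k ∈ Finset.range n, f ℓ (Y k ω)) / n)
          atTop (nhds (c i ℓ)) := by
      rw [ae_all_iff]
      intro ℓ
      have hfid : ∀ k, ProbabilityTheory.IdentDistrib (fun ω => f ℓ (Y k ω))
          (fun ω => f ℓ (Y 0 ω)) Pi Pi := fun k => (hident k).comp (hfm ℓ)
      have hfindep : Pairwise (Function.onFun (ProbabilityTheory.IndepFun · · Pi) fun k ω => f ℓ (Y k ω)) :=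
        fun k l hkl => ProbabilityTheory.IndepFun.comp (hindep hkl) (hfm ℓ) (hfm ℓ)
      have hintwd : Integrable (f ℓ) (φ.withDensity (fun u => ENNReal.ofReal (g i u))) := by
        rw [integrable_withDensity_iff ((hgm i).ennreal_ofReal)
          (Filter.Eventually.of_forall fun u => ENNReal.ofReal_lt_top)]
        have : (fun u => f ℓ u * (ENNReal.ofReal (g i u)).toReal) = fun u => g i u * f ℓ u := by
          funext u
          rw [ENNReal.toReal_ofReal (hg0 i u)]
          ring
        rw [this]
        exact hgfint i ℓ
      have hfint : Integrable (fun ω => f ℓ (Y 0 ω)) Pi := by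
        have := (integrable_map_measure (hfm ℓ).aestronglyMeasurable (hY 0).aemeasurable
          (μ := Pi)).1
        rw [hmapwd] at this
        exact this hintwd
      have hmean : ∫ ω, f ℓ (Y 0 ω) ∂Pi = c i ℓ := by
        have h1 : ∫ ω, f ℓ (Y 0 ω) ∂Pi = ∫ u, f ℓ u ∂(Measure.map (Y 0) Pi) :=
          (integral_map (hY 0).aemeasurable (hfm ℓ).aestronglyMeasurable).symm
        rw [h1, hmapwd]
        have h2 : (fun u => ENNReal.ofReal (g i u)) =
            fun u => ((fun u => (g i u).toNNReal) u : ℝ≥0∞) := rfl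
        rw [h2, integral_withDensity_eq_integral_smul (hgm i).real_toNNReal]
        congr 1
        funext u
        rw [NNReal.smul_def, smul_eq_mul, Real.coe_toNNReal _ (hg0 i u)]
      have := ProbabilityTheory.strong_law_ae_real (fun k ω => f ℓ (Y k ω)) hfint
        hfindep hfid
      rw [hmean] at this
      exact this
    rw [hPidef, Measure.ae_ennreal_smul_measure_iff (by simp [ha0, haT])] at hae
    exact hae
  -- the tail event A
  set A : Set Ω := ⋂ ℓ : Fin d, {ω | Tendsto
      (fun n : ℕ => max ((∑ k ∈ Finset.range n, f ℓ (Y k ω)) / n) 0) atTop (nhds 0)} with hAdef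
  -- A is measurable w.r.t. the σ-algebra generated by the Y's
  have hYm' : ∀ k : ℕ, @Measurable Ω ℝ (⨆ k : ℕ, MeasurableSpace.comap (Y k)
      (inferInstance : MeasurableSpace ℝ)) _ (Y k) := fun k =>
    Measurable.of_comap_le (le_iSup (fun k => MeasurableSpace.comap (Y k)
      (inferInstance : MeasurableSpace ℝ)) k)
  have hAm' : MeasurableSet[⨆ k : ℕ, MeasurableSpace.comap (Y k)
      (inferInstance : MeasurableSpace ℝ)] A := by
    rw [hAdef]
    refine MeasurableSet.iInter fun ℓ => ?_
    have hfn : ∀ n : ℕ, @Measurable Ω ℝ (⨆ k : ℕ, MeasurableSpace.comap (Y k)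
        (inferInstance : MeasurableSpace ℝ)) _
        (fun ω => max ((∑ k ∈ Finset.range n, f ℓ (Y k ω)) / n) 0) := by
      intro n
      refine Measurable.max ?_ measurable_const
      refine Measurable.div_const ?_ _
      exact Finset.measurable_sum _ (fun k _ => (hfm ℓ).comp (hYm' k))
    exact measurableSet_tendsto (nhds 0) hfn
  have hm'le : (⨆ k : ℕ, MeasurableSpace.comap (Y k)
      (inferInstance : MeasurableSpace ℝ)) ≤ m0 := iSup_le fun k => (hY k).comap_le
  have hAm0 : MeasurableSet A := hm'le A hAm'
  -- the symmetric difference is null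
  have hnull : P (symmDiff A E) = 0 := by
    have hcover : symmDiff A E ⊆ ⋃ i : Fin d, (symmDiff A E ∩ {ω | X ω = i}) := by
      intro ω hω
      exact Set.mem_iUnion.2 ⟨X ω, hω, rfl⟩
    have hle1 : P (symmDiff A E) ≤ P (⋃ i : Fin d, (symmDiff A E ∩ {ω | X ω = i})) :=
      measure_mono hcover
    have hle2 : P (⋃ i : Fin d, (symmDiff A E ∩ {ω | X ω = i})) ≤
        ∑' i : Fin d, P (symmDiff A E ∩ {ω | X ω = i}) := measure_iUnion_le _
    have hle := hle1.trans hle2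
    have hzero : ∀ i : Fin d, P (symmDiff A E ∩ {ω | X ω = i}) = 0 := by
      intro i
      set Bad : Set Ω := {ω | ¬ ∀ ℓ : Fin d, Tendsto
        (fun n : ℕ => (∑ k ∈ Finset.range n, f ℓ (Y k ω)) / n) atTop (nhds (c i ℓ))} with hBad
      have hBadnull : P.restrict {ω | X ω = i} Bad = 0 := (key i)
      have hsub : symmDiff A E ∩ {ω | X ω = i} ⊆ Bad := by
        rintro ω ⟨hωs, hωi⟩
        by_contra hωB
        rw [hBad, Set.mem_setOf_eq, not_not] at hωB
        have hXω : X ω = i := hωi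
        have hiffAE : ω ∈ A ↔ ω ∈ E := by
          rw [hES, Set.mem_preimage, hXω]
          constructor
          · intro hωA
            by_contra hiS
            have h1 : Tendsto (fun n : ℕ => max ((∑ k ∈ Finset.range n, f i (Y k ω)) / n) 0)
                atTop (nhds 0) := by
              rw [hAdef] at hωA
              exact Set.mem_iInter.1 hωA i
            have h2 : Tendsto (fun n : ℕ => max ((∑ k ∈ Finset.range n, f i (Y k ω)) / n) 0)
                atTop (nhds (max (c i i) 0)) := (hωB i).max tendsto_const_nhds
            have := tendsto_nhds_unique h1 h2
            have hpos := hSc' i hiS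
            rw [max_eq_left hpos.le] at this
            exact absurd this.symm hpos.ne'
          · intro hiS
            rw [hAdef]
            refine Set.mem_iInter.2 fun ℓ => ?_
            have h2 : Tendsto (fun n : ℕ => max ((∑ k ∈ Finset.range n, f ℓ (Y k ω)) / n) 0)
                atTop (nhds (max (c i ℓ) 0)) := (hωB ℓ).max tendsto_const_nhds
            rwa [max_eq_right (hSc i hiS ℓ)] at h2
        rcases Set.mem_symmDiff.1 hωs with ⟨h1, h2⟩ | ⟨h1, h2⟩
        · exact h2 (hiffAE.1 h1)
        · exact h2 (hiffAE.2 h1)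
      apply le_antisymm _ zero_le
      calc P (symmDiff A E ∩ {ω | X ω = i})
          = P.restrict {ω | X ω = i} (symmDiff A E ∩ {ω | X ω = i}) := by
            rw [Measure.restrict_apply' (hXi i), Set.inter_assoc, Set.inter_self]
        _ ≤ P.restrict {ω | X ω = i} Bad := measure_mono hsub
        _ = 0 := hBadnull
    simp only [hzero] at hle
    simpa using hle
  refine ⟨⟨A, hAm', hnull⟩, ?_⟩
  -- the filtration generated by Y_0, …, Y_{m-1}
  set ℱ : Filtration ℕ m0 :=
    { seq := fun m => ⨆ k ∈ Finset.range m, MeasurableSpace.comap (Y k)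
        (inferInstance : MeasurableSpace ℝ),
      mono' := fun m n hmn => biSup_mono fun k hk =>
        Finset.range_subset_range.2 hmn hk,
      le' := fun m => iSup_le fun k => iSup_le fun _ => (hY k).comap_le } with hFdef
  have hsupeq : (⨆ n, ℱ n) = ⨆ k : ℕ, MeasurableSpace.comap (Y k)
      (inferInstance : MeasurableSpace ℝ) := by
    apply le_antisymm
    · exact iSup_le fun m => iSup_le fun k => iSup_le fun _ =>
        le_iSup (fun k => MeasurableSpace.comap (Y k) (inferInstance : MeasurableSpace ℝ)) k
    · refine iSup_le fun k => ?_
      refine le_trans ?_ (le_iSup (fun m => (ℱ m : MeasurableSpace Ω)) (k + 1))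
      exact le_biSup (fun i => MeasurableSpace.comap (Y i) (inferInstance : MeasurableSpace ℝ))
        (Finset.mem_range.2 (Nat.lt_succ_self k))
  set f0 : Ω → ℝ := E.indicator (fun _ => (1 : ℝ)) with hf0def
  set g0 : Ω → ℝ := A.indicator (fun _ => (1 : ℝ)) with hg0def
  have hEm0 : MeasurableSet E := by
    rw [hES]; exact hX (MeasurableSet.of_discrete (s := S))
  have hfg : f0 =ᵐ[P] g0 := by
    have hsub : {ω | ¬ f0 ω = g0 ω} ⊆ symmDiff A E := by
      intro ω hω
      simp only [Set.mem_setOf_eq, hf0def, hg0def] at hω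
      rw [Set.mem_symmDiff]
      by_cases hA : ω ∈ A
      · by_cases hEω : ω ∈ E
        · exact absurd (by simp [hA, hEω]) hω
        · exact Or.inl ⟨hA, hEω⟩
      · by_cases hEω : ω ∈ E
        · exact Or.inr ⟨hEω, hA⟩
        · exact absurd (by simp [hA, hEω]) hω
    exact measure_mono_null hsub hnull
  have hf0int : Integrable f0 P := (integrable_const (1 : ℝ)).indicator hEm0
  have hg0int : Integrable g0 P := (integrable_const (1 : ℝ)).indicator hAm0
  have hg0meas : StronglyMeasurable[⨆ n, ℱ n] g0 := by
    refine StronglyMeasurable.indicator stronglyMeasurable_const ?_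
    rw [hsupeq]
    exact hAm'
  have hlevy : ∀ᵐ ω ∂P, Tendsto (fun m => (P[g0|ℱ m]) ω) atTop (nhds (g0 ω)) :=
    hg0int.tendsto_ae_condExp hg0meas
  have hcongr : ∀ m : ℕ, P[f0|ℱ m] =ᵐ[P] P[g0|ℱ m] := fun m => condExp_congr_ae hfg
  have hbd : ∀ m : ℕ, ∀ᵐ ω ∂P, |(P[f0|ℱ m]) ω| ≤ 1 := by
    intro m
    have h1 : 0 ≤ᵐ[P] P[f0|ℱ m] :=
      condExp_nonneg (Filter.Eventually.of_forall fun ω =>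
        Set.indicator_nonneg (fun _ _ => zero_le_one) ω)
    have h2 : P[f0|ℱ m] ≤ᵐ[P] P[(fun _ => (1 : ℝ))|ℱ m] := by
      refine condExp_mono hf0int (integrable_const 1)
        (Filter.Eventually.of_forall fun ω => ?_)
      rw [hf0def]
      by_cases hEω : ω ∈ E <;> simp [hEω]
    rw [condExp_const (ℱ.le m)] at h2
    filter_upwards [h1, h2] with ω h1ω h2ω
    simp only [Pi.zero_apply] at h1ω
    rw [abs_le]
    exact ⟨by linarith, h2ω⟩
  have hmainae : ∀ᵐ ω ∂P, Tendsto (fun m => (f0 ω - (P[f0|ℱ m]) ω) ^ 2) atTop (nhds 0) := by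
    filter_upwards [ae_all_iff.2 hcongr, hlevy, hfg] with ω hω hlim heq
    have h1 : Tendsto (fun m => (P[f0|ℱ m]) ω) atTop (nhds (g0 ω)) :=
      hlim.congr fun m => (hω m).symm
    have h2 : Tendsto (fun m => f0 ω - (P[f0|ℱ m]) ω) atTop (nhds 0) := by
      have h2' := (tendsto_const_nhds (x := f0 ω) (f := atTop)).sub h1
      have h4 : f0 ω - g0 ω = 0 := by rw [heq, sub_self]
      rwa [h4] at h2'
    have h3 := h2.pow 2
    simpa using h3
  have hfin : Tendsto (fun m : ℕ => ∫ ω, (f0 ω - (P[f0|ℱ m]) ω) ^ 2 ∂P)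
      atTop (nhds (∫ _ω, (0 : ℝ) ∂P)) := by
    refine tendsto_integral_of_dominated_convergence (bound := fun _ => (4 : ℝ))
      ?_ (integrable_const 4) ?_ hmainae
    · intro m
      refine AEStronglyMeasurable.pow ?_ _
      exact ((stronglyMeasurable_const.indicator hEm0).sub
        (stronglyMeasurable_condExp.mono (ℱ.le m))).aestronglyMeasurable
    · intro m
      filter_upwards [hbd m] with ω hω
      have hf0b : |f0 ω| ≤ 1 := by
        rw [hf0def]
        by_cases hEω : ω ∈ E <;> simp [hEω]
      rw [Real.norm_eq_abs, abs_pow]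
      nlinarith [abs_nonneg (f0 ω - (P[f0|ℱ m]) ω), abs_sub (f0 ω) ((P[f0|ℱ m]) ω),
        abs_sub_abs_le_abs_sub (f0 ω) ((P[f0|ℱ m]) ω), abs_nonneg (f0 ω),
        abs_nonneg ((P[f0|ℱ m]) ω), sq_abs (f0 ω - (P[f0|ℱ m]) ω),
        abs_sub_le (f0 ω) 0 ((P[f0|ℱ m]) ω)]
  rw [integral_zero] at hfin
  exact hfin
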